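/- Let q = 2, so r = 2^m. Let g_1, …, g_u ∈ F_r^* have multiplicative orders n_1, …, n_u with gcd(n_i, n_j) = 1 for all i ≠ j, set N_i = (r−1)/n_i and n = n_1 ⋯ n_u, and for a_1, …, a_u ∈ F_r let c(a_1, …, a_u) ∈ F_2^n be the word with coordinates Tr_{r/2}(Σ_{i=1}^u a_i g_i^t), t = 0, …, n−1. Then the Hamming weight of c(a_1, …, a_u) equals n/2 − (1/2) Π_{i=1}^u η̄_{a_i}, where η̄_{a_i} = n_i if a_i = 0, and η̄_{a_i} = η_j^{(N_i, r)} if a_i ∈ C_j^{(N_i, r)} (equality after casting the weight into ℂ). -/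

import Mathlib

/-- The canonical additive character `ψ(x) = e^{2πi·Tr_{F/F_p}(x)/p}` of a finite field `F`
of characteristic `p` (for `p = 2` this is `(-1)^{Tr(x)}`). -/
noncomputable def psi (p : ℕ) (F : Type*) [Field F] [Fintype F] [Algebra (ZMod p) F]
    (x : F) : ℂ :=
  Complex.exp (2 * (Real.pi : ℂ) * Complex.I * ((Algebra.trace (ZMod p) F x).val : ℂ) / (p : ℂ))

/-- The cyclotomic class `C_i^{(N,r)} = α^i ⟨α^N⟩` in a finite field. -/
def cClass (F : Type*) [Field F] (α : Fˣ) (N i : ℕ) : Set F :=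
  {x | ∃ t : ℕ, x = ((α ^ (i + N * t) : Fˣ) : F)}

/-- The Gauss period `η_i^{(N,r)} = Σ_{x ∈ C_i^{(N,r)}} ψ(x)`. -/
noncomputable def gaussPeriod (p : ℕ) (F : Type*) [Field F] [Fintype F] [Algebra (ZMod p) F]
    (α : Fˣ) (N i : ℕ) : ℂ :=
  ∑ t ∈ Finset.range ((Fintype.card F - 1) / N), psi p F ((α ^ (i + N * t) : Fˣ) : F)

section Aux

lemma zmod2_cases (z : ZMod 2) : z = 0 ∨ z = 1 := by
  revert z; decide

variable (F : Type*) [Field F] [Fintype F] [Algebra (ZMod 2) F]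

lemma psi_two_eq (x : F) :
    psi 2 F x = if Algebra.trace (ZMod 2) F x = 0 then 1 else -1 := by
  rcases zmod2_cases (Algebra.trace (ZMod 2) F x) with h | h <;> rw [psi, h] <;> simp [ZMod.val]
  show Complex.exp (2 * (Real.pi : ℂ) * Complex.I * ((1 : ℕ) : ℂ) / 2) = -1
  rw [Nat.cast_one, mul_one]
  rw [show (2 : ℂ) * Real.pi * Complex.I / 2 = Real.pi * Complex.I by ring,
    Complex.exp_pi_mul_I]

lemma psi_zero : psi 2 F 0 = 1 := by
  rw [psi_two_eq]; simp

lemma psi_add (x y : F) : psi 2 F (x + y) = psi 2 F x * psi 2 F y := by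
  have h11 : (1 + 1 : ZMod 2) = 0 := by decide
  have h10 : (1 : ZMod 2) ≠ 0 := by decide
  rw [psi_two_eq, psi_two_eq, psi_two_eq, map_add]
  rcases zmod2_cases (Algebra.trace (ZMod 2) F x) with hx | hx <;>
    rcases zmod2_cases (Algebra.trace (ZMod 2) F y) with hy | hy <;>
      rw [hx, hy] <;> simp [h11, h10]

lemma psi_sum {ι : Type*} (s : Finset ι) (f : ι → F) :
    psi 2 F (∑ i ∈ s, f i) = ∏ i ∈ s, psi 2 F (f i) := by
  classical
  induction s using Finset.cons_induction with
  | empty => simp [psi_zero]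
  | cons i s hi ih => rw [Finset.sum_cons, Finset.prod_cons, psi_add, ih]

end Aux

lemma sum_zmod_eq_range {n : ℕ} [NeZero n] (f : ZMod n → ℂ) :
    ∑ z : ZMod n, f z = ∑ t ∈ Finset.range n, f t := by
  refine Finset.sum_nbij' (i := fun z => z.val) (j := fun t => (t : ZMod n)) ?_ ?_ ?_ ?_ ?_
  · intro z _; exact Finset.mem_range.mpr (ZMod.val_lt z)
  · intro t _; exact Finset.mem_univ _
  · intro z _; exact ZMod.natCast_rightInverse z
  · intro t ht; exact ZMod.val_natCast_of_lt (Finset.mem_range.mp ht)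
  · intro z _; rw [ZMod.natCast_rightInverse z]

lemma sum_zmod_shift {n : ℕ} [NeZero n] (f : ZMod n → ℂ) (s k : ℕ) (hk : Nat.Coprime k n) :
    ∑ z : ZMod n, f ((s : ZMod n) + (k : ZMod n) * z) = ∑ z : ZMod n, f z := by
  have hbij : Function.Bijective (fun z : ZMod n => (s : ZMod n) + (k : ZMod n) * z) := by
    have : (fun z : ZMod n => (s : ZMod n) + (k : ZMod n) * z)
        = (fun z => (s : ZMod n) + z) ∘ (fun z => ((ZMod.unitOfCoprime k hk : ZMod n)) * z) := by
      funext z; simp [ZMod.coe_unitOfCoprime]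
    rw [this]
    exact (Equiv.addLeft (s : ZMod n)).bijective.comp
      (Units.mulLeft (ZMod.unitOfCoprime k hk)).bijective
  exact Fintype.sum_bijective _ hbij _ _ (fun z => rfl)

lemma innerSumEval (F : Type*) [Field F] [Fintype F] [DecidableEq F] [Algebra (ZMod 2) F]
    (α : Fˣ) (hordα : orderOf α = Fintype.card F - 1) (hR : 0 < Fintype.card F - 1)
    (gi : Fˣ) (e : ℕ) (he : α ^ e = gi) (ni Ni ji : ℕ) [NeZero ni]
    (hni : orderOf gi = ni) (hNi : Ni = (Fintype.card F - 1) / ni)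
    (a : F) (hja : a ≠ 0 → a ∈ cClass F α Ni ji) :
    ∑ z : ZMod ni, psi 2 F (a * (gi : F) ^ z.val)
      = if a = 0 then (ni : ℂ) else gaussPeriod 2 F α Ni ji := by
  set R := Fintype.card F - 1 with hRdef
  by_cases ha : a = 0
  · simp [ha, psi_zero, Finset.sum_const, ZMod.card]
  · rw [if_neg ha]
    have hnipos : 0 < ni := Nat.pos_of_ne_zero (NeZero.ne ni)
    have hdvd : ni ∣ R := by
      rw [← hni, hRdef, ← Fintype.card_units]
      exact orderOf_dvd_card
    have hNipos : 0 < Ni := by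
      rw [hNi]
      exact Nat.div_pos (Nat.le_of_dvd hR hdvd) hnipos
    have hRfact : R = Ni * ni := by
      rw [hNi, Nat.div_mul_cancel hdvd]
    have hgcd : Nat.gcd R e = Ni := by
      have h1 : orderOf (α ^ e) = R / Nat.gcd R e := by
        rw [orderOf_pow, hordα]
      rw [he, hni] at h1
      have h2 : Nat.gcd R e ∣ R := Nat.gcd_dvd_left _ _
      have h3 : Nat.gcd R e * ni = R := by
        conv_lhs => rw [h1]
        exact Nat.mul_div_cancel' h2
      rw [hNi]
      exact (Nat.div_eq_of_eq_mul_left hnipos h3.symm).symm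
    obtain ⟨k, hk⟩ : Ni ∣ e := hgcd ▸ Nat.gcd_dvd_right R e
    have hkcop : Nat.Coprime k ni := by
      have : Nat.gcd (Ni * ni) (Ni * k) = Ni := by rw [← hRfact, ← hk, hgcd]
      rw [Nat.gcd_mul_left] at this
      have h1 : Nat.gcd ni k = 1 :=
        Nat.eq_of_mul_eq_mul_left hNipos (this.trans (mul_one Ni).symm)
      exact Nat.coprime_comm.mp h1
    obtain ⟨s, hs⟩ := hja ha
    have hordN : orderOf (α ^ Ni : Fˣ) = ni := by
      rw [orderOf_pow, hordα, Nat.gcd_eq_right ⟨ni, hRfact⟩, hRfact,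
        Nat.mul_div_cancel_left _ hNipos]
    set G : ℕ → ℂ := fun w => psi 2 F ((α ^ (ji + Ni * w) : Fˣ) : F) with hG
    have hsplit : ∀ w : ℕ, (α ^ (ji + Ni * w) : Fˣ) = α ^ ji * (α ^ Ni) ^ w := by
      intro w; rw [pow_add, pow_mul]
    have hGmod : ∀ w : ℕ, G w = G (w % ni) := by
      intro w
      simp only [hG, hsplit, ← hordN, pow_mod_orderOf]
    have key1 : ∀ t : ℕ, a * (gi : F) ^ t = ((α ^ (ji + Ni * (s + k * t)) : Fˣ) : F) := by
      intro t
      rw [hs, ← he, hk, ← Units.val_pow_eq_pow_val, ← Units.val_mul, ← pow_mul, ← pow_add]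
      congr 2
      ring
    have key2 : ∀ w : ℕ, G w = G ((w : ZMod ni)).val := by
      intro w
      rw [ZMod.val_natCast, ← hGmod]
    calc ∑ z : ZMod ni, psi 2 F (a * (gi : F) ^ z.val)
        = ∑ z : ZMod ni, G (((s : ZMod ni) + (k : ZMod ni) * z)).val := by
          refine Finset.sum_congr rfl fun z _ => ?_
          have hcast : ((s : ZMod ni) + (k : ZMod ni) * z) = (((s + k * z.val : ℕ)) : ZMod ni) := by
            push_cast
            rw [ZMod.natCast_rightInverse z]
          rw [key1, hcast, ← key2]
      _ = ∑ z : ZMod ni, G z.val := sum_zmod_shift (fun z => G z.val) s k hkcop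
      _ = ∑ t ∈ Finset.range ni, G (((t : ℕ) : ZMod ni)).val :=
          sum_zmod_eq_range (fun z => G z.val)
      _ = ∑ t ∈ Finset.range ni, G t := by
          refine Finset.sum_congr rfl fun t _ => ?_
          rw [← key2]
      _ = gaussPeriod 2 F α Ni ji := by
          rw [gaussPeriod, ← hRdef, hRfact, Nat.mul_div_cancel_left _ hNipos]

lemma crt_sum {u : ℕ} (n : Fin u → ℕ) [∀ i, NeZero (n i)]
    (hcop : ∀ i j, i ≠ j → Nat.Coprime (n i) (n j)) (f : ∀ i, ZMod (n i) → ℂ) :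
    ∑ t : Fin (∏ i, n i), ∏ i, f i (((t : ℕ) : ZMod (n i)))
      = ∏ i, ∑ z : ZMod (n i), f i z := by
  rw [Fintype.prod_sum]
  refine Fintype.sum_bijective
    (fun t : Fin (∏ i, n i) => fun i => (((t : ℕ) : ZMod (n i)))) ?_ _ _ (fun t => rfl)
  rw [Fintype.bijective_iff_injective_and_card]
  refine ⟨?_, by simp [ZMod.card]⟩
  intro t s h
  have hmod : ∀ i, ((n i : ℤ)) ∣ ((s : ℕ) : ℤ) - ((t : ℕ) : ℤ) := by
    intro i
    have hi : ((t : ℕ) : ZMod (n i)) = ((s : ℕ) : ZMod (n i)) := congrFun h i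
    exact (ZMod.natCast_eq_natCast_iff _ _ _ |>.mp hi).dvd
  have hdvd : (((∏ i, n i : ℕ) : ℤ)) ∣ ((s : ℕ) : ℤ) - ((t : ℕ) : ℤ) := by
    have := Fintype.prod_dvd_of_coprime (s := fun i => (n i : ℤ))
      (fun i j hij => by
        simp only [Function.onFun]
        rw [Int.isCoprime_iff_gcd_eq_one, Int.gcd_natCast_natCast]
        exact hcop i j hij)
      hmod
    simpa using this
  have hz : ((s : ℕ) : ℤ) - ((t : ℕ) : ℤ) = 0 := by
    refine Int.eq_zero_of_abs_lt_dvd hdvd ?_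
    have h1 : (t : ℕ) < ∏ i, n i := t.2
    have h2 : (s : ℕ) < ∏ i, n i := s.2
    rw [abs_sub_lt_iff]
    constructor <;> omega
  have : (t : ℕ) = (s : ℕ) := by omega
  exact Fin.ext this

/-- for `q = 2` the Hamming weight of `c(a₁, …, a_u)` equals
`n/2 - (1/2) Π_i η̄_{a_i}`. -/
theorem stmt2 (m u : ℕ) (hm : 0 < m) (F : Type*) [Field F] [Fintype F] [DecidableEq F]
    [Algebra (ZMod 2) F] (hr : Fintype.card F = 2 ^ m)
    (α : Fˣ) (hα : ∀ x : Fˣ, x ∈ Subgroup.zpowers α)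
    (g : Fin u → Fˣ) (n : Fin u → ℕ) (hord : ∀ i, orderOf (g i) = n i)
    (hcop : ∀ i j, i ≠ j → Nat.Coprime (n i) (n j))
    (N : Fin u → ℕ) (hN : ∀ i, N i = (Fintype.card F - 1) / n i)
    (a : Fin u → F) (j : Fin u → ℕ) (hjlt : ∀ i, j i < N i)
    (hj : ∀ i, a i ≠ 0 → a i ∈ cClass F α (N i) (j i)) :
    (hammingNorm (fun t : Fin (∏ i, n i) =>
        Algebra.trace (ZMod 2) F (∑ i, a i * (g i : F) ^ (t : ℕ))) : ℂ)
      = (∏ i, (n i : ℂ)) / 2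
        - (1 / 2) * ∏ i, (if a i = 0 then (n i : ℂ) else gaussPeriod 2 F α (N i) (j i)) := by
  haveI : ∀ i, NeZero (n i) := fun i => ⟨(hord i ▸ orderOf_pos (g i)).ne'⟩
  have hordα : orderOf α = Fintype.card F - 1 := by
    rw [← Fintype.card_units, ← Nat.card_eq_fintype_card]
    exact orderOf_eq_card_of_forall_mem_zpowers hα
  have hR : 0 < Fintype.card F - 1 := by
    have h2 : 2 ^ 1 ≤ 2 ^ m := Nat.pow_le_pow_right (by norm_num) hm
    omega
  set x : Fin (∏ i, n i) → F := fun t => ∑ i, a i * (g i : F) ^ (t : ℕ) with hx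
  -- Step 1: the weight as a sum of indicators
  have hw : ((hammingNorm (fun t : Fin (∏ i, n i) =>
      Algebra.trace (ZMod 2) F (x t))) : ℂ)
      = ∑ t : Fin (∏ i, n i), (if Algebra.trace (ZMod 2) F (x t) = 0 then (0 : ℂ) else 1) := by
    rw [hammingNorm, Finset.card_filter]
    push_cast
    refine Finset.sum_congr rfl fun t _ => ?_
    split_ifs with h1 h2 h2 <;> simp_all
  -- Step 2: sum of psi factorizes
  have hsum : ∑ t : Fin (∏ i, n i), psi 2 F (x t)
      = ∏ i, (if a i = 0 then (n i : ℂ) else gaussPeriod 2 F α (N i) (j i)) := by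
    have step1 : ∀ t : Fin (∏ i, n i), psi 2 F (x t)
        = ∏ i, psi 2 F (a i * (g i : F) ^ ((((t : ℕ) : ZMod (n i))).val)) := by
      intro t
      rw [hx, psi_sum]
      refine Finset.prod_congr rfl fun i _ => ?_
      congr 2
      rw [ZMod.val_natCast]
      conv_lhs => rw [← Units.val_pow_eq_pow_val, ← pow_mod_orderOf, hord i,
        Units.val_pow_eq_pow_val]
    calc ∑ t : Fin (∏ i, n i), psi 2 F (x t)
        = ∑ t : Fin (∏ i, n i), ∏ i,
            psi 2 F (a i * (g i : F) ^ ((((t : ℕ) : ZMod (n i))).val)) :=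
          Finset.sum_congr rfl fun t _ => step1 t
      _ = ∏ i, ∑ z : ZMod (n i), psi 2 F (a i * (g i : F) ^ z.val) :=
          crt_sum n hcop (fun i z => psi 2 F (a i * (g i : F) ^ z.val))
      _ = ∏ i, (if a i = 0 then (n i : ℂ) else gaussPeriod 2 F α (N i) (j i)) := by
          refine Finset.prod_congr rfl fun i _ => ?_
          obtain ⟨e, he⟩ := Submonoid.mem_powers_iff _ _ |>.mp
            (mem_powers_iff_mem_zpowers.mpr (hα (g i)))
          exact innerSumEval F α hordα hR (g i) e he (n i) (N i) (j i)
            (hord i) (hN i) (a i) (hj i)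
  -- Step 3: pointwise relation between psi and indicator
  have hpt : ∀ t : Fin (∏ i, n i), psi 2 F (x t)
      = 1 - 2 * (if Algebra.trace (ZMod 2) F (x t) = 0 then (0 : ℂ) else 1) := by
    intro t
    rw [psi_two_eq]
    split_ifs <;> ring
  have hcard : ∑ _t : Fin (∏ i, n i), (1 : ℂ) = ∏ i, (n i : ℂ) := by
    rw [Finset.sum_const, Finset.card_univ, Fintype.card_fin, nsmul_eq_mul, mul_one]
    exact Nat.cast_prod _ _
  have hsum2 : ∑ t : Fin (∏ i, n i), psi 2 F (x t)
      = (∏ i, (n i : ℂ))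
        - 2 * ∑ t : Fin (∏ i, n i), (if Algebra.trace (ZMod 2) F (x t) = 0 then (0 : ℂ) else 1) := by
    simp only [hpt]
    rw [Finset.sum_sub_distrib, hcard, ← Finset.mul_sum]
  rw [hw]
  rw [hsum2] at hsum
  linear_combination (-(1 : ℂ) / 2) * hsum
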